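/- Let X be a finite set and let p, q be fixed-point-free involutions of X. Then q·(pq)⁻¹·q = pq as permutations, so conjugation-inversion c ↦ q·c⁻¹·q maps the set of (nontrivial) cycles of the permutation pq bijectively to itself; moreover for every nontrivial cycle c of pq one has q·c⁻¹·q ≠ c, and for every x in the support of c, the orbit of x under the subgroup ⟨p,q⟩ generated by p and q equals supp(c) ∪ supp(q·c⁻¹·q) = supp(c) ∪ q(supp(c)). -/

import Mathlib

open Equiv Equiv.Perm

/-- for fixed-point-free involutions `p, q` of a finite set `X` one has
`q·(pq)⁻¹·q = pq`, so `c ↦ q·c⁻¹·q` maps the set of (nontrivial) cycles of `pq` bijectively to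
itself; moreover `q·c⁻¹·q ≠ c` for every cycle `c` of `pq`, and for every `x` in the support of
`c`, the orbit of `x` under `⟨p, q⟩` equals `supp(c) ∪ supp(q·c⁻¹·q) = supp(c) ∪ q(supp(c))`. -/
theorem stmt_4 (X : Type*) [Fintype X] [DecidableEq X] (p q : Equiv.Perm X)
    (hp2 : p * p = 1) (hq2 : q * q = 1)
    (hp : ∀ x, p x ≠ x) (hq : ∀ x, q x ≠ x) :
    q * (p * q)⁻¹ * q = p * q
    ∧ Set.BijOn (fun c => q * c⁻¹ * q)
        ↑((p * q).cycleFactorsFinset) ↑((p * q).cycleFactorsFinset)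
    ∧ (∀ c ∈ (p * q).cycleFactorsFinset, q * c⁻¹ * q ≠ c)
    ∧ (∀ c ∈ (p * q).cycleFactorsFinset, ∀ x ∈ c.support,
        MulAction.orbit (↥(Subgroup.closure ({p, q} : Set (Equiv.Perm X)))) x
            = ↑c.support ∪ ↑(q * c⁻¹ * q).support
        ∧ (↑(q * c⁻¹ * q).support : Set X) = ⇑q '' ↑c.support) := by
  set t := p * q with ht
  have hpinv : p⁻¹ = p := by rw [inv_eq_iff_mul_eq_one, hp2]
  have hqinv : q⁻¹ = q := by rw [inv_eq_iff_mul_eq_one, hq2]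
  have hqq : ∀ y : X, q (q y) = y := fun y => by
    rw [← Equiv.Perm.mul_apply, hq2, Equiv.Perm.one_apply]
  have hpp : ∀ y : X, p (p y) = y := fun y => by
    rw [← Equiv.Perm.mul_apply, hp2, Equiv.Perm.one_apply]
  have h1 : q * t⁻¹ * q = t := by
    rw [ht, mul_inv_rev, hpinv, hqinv]
    calc q * (q * p) * q = (q * q) * (p * q) := by group
    _ = p * q := by rw [hq2, one_mul]
  have h2 : q * t * q = t⁻¹ := by
    have h3 : (q * t⁻¹ * q)⁻¹ = t⁻¹ := by rw [h1]
    calc q * t * q = (q * t⁻¹ * q)⁻¹ := by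
          rw [mul_inv_rev, mul_inv_rev, hqinv, inv_inv, mul_assoc]
    _ = t⁻¹ := h3
  have hpt : p = t * q := by rw [ht, mul_assoc, hq2, mul_one]
  have htq : t * q = q * t⁻¹ := by
    calc t * q = (q * q) * t * q := by rw [hq2, one_mul]
    _ = q * (q * t * q) := by group
    _ = q * t⁻¹ := by rw [h2]
  have hconj : ∀ k : ℤ, q * t ^ k * q = t ^ (-k) := by
    intro k
    calc q * t ^ k * q = q * t ^ k * q⁻¹ := by rw [hqinv]
    _ = (q * t * q⁻¹) ^ k := (conj_zpow).symm
    _ = (q * t * q) ^ k := by rw [hqinv]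
    _ = (t⁻¹) ^ k := by rw [h2]
    _ = t ^ (-k) := by rw [inv_zpow, zpow_neg]
  have key : ∀ (k : ℤ) (y : X), q ((t ^ k) y) = (t ^ (-k)) (q y) := by
    intro k y
    have h := congrArg (fun s : Equiv.Perm X => s (q y)) (hconj k)
    simpa [Equiv.Perm.mul_apply, hqq] using h
  have hsupp : ∀ c : Equiv.Perm X, ((q * c⁻¹ * q).support : Set X) = ⇑q '' ↑c.support := by
    intro c
    have h : q * c⁻¹ * q = q * c⁻¹ * q⁻¹ := by rw [hqinv]
    rw [h, Equiv.Perm.support_conj, Equiv.Perm.support_inv, Finset.coe_map]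
    rfl
  -- inverse cycles
  have aux : ∀ g c : Equiv.Perm X, c ∈ g.cycleFactorsFinset → c⁻¹ ∈ g⁻¹.cycleFactorsFinset := by
    intro g c h
    rw [Equiv.Perm.mem_cycleFactorsFinset_iff] at h ⊢
    refine ⟨h.1.inv, fun a ha => ?_⟩
    rw [Equiv.Perm.support_inv] at ha
    have hmem : c⁻¹ a ∈ c.support := by
      rw [← Equiv.Perm.support_inv, Equiv.Perm.apply_mem_support, Equiv.Perm.support_inv]
      exact ha
    have hga : g (c⁻¹ a) = a := by rw [← h.2 _ hmem, Equiv.Perm.coe_inv, Equiv.apply_symm_apply]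
    rw [← Equiv.apply_eq_iff_eq g, Equiv.Perm.coe_inv g, Equiv.apply_symm_apply]
    exact hga
  have mapsTo : ∀ c ∈ t.cycleFactorsFinset, q * c⁻¹ * q ∈ t.cycleFactorsFinset := by
    intro c hc
    have h := (Equiv.Perm.mem_cycleFactorsFinset_conj t⁻¹ q c⁻¹).mpr (aux t c hc)
    rwa [hqinv, h1] at h
  have hinv : ∀ c : Equiv.Perm X, q * (q * c⁻¹ * q)⁻¹ * q = c := by
    intro c
    rw [mul_inv_rev, mul_inv_rev, hqinv, inv_inv]
    calc q * (q * (c * q)) * q = (q * q) * c * (q * q) := by group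
    _ = c := by rw [hq2]; simp
  have part3 : ∀ c ∈ t.cycleFactorsFinset, q * c⁻¹ * q ≠ c := by
    intro c hc heq
    obtain ⟨x, hx⟩ := (Equiv.Perm.mem_cycleFactorsFinset_iff.mp hc).1.nonempty_support
    have hcx : c = t.cycleOf x := Equiv.Perm.cycle_is_cycleOf hx hc
    have hqx : q x ∈ c.support := by
      have h : q x ∈ (↑(q * c⁻¹ * q).support : Set X) := by
        rw [hsupp]; exact ⟨x, hx, rfl⟩
      rw [heq] at h; exact h
    have hsc : t.SameCycle x (q x) := by
      rw [hcx, Equiv.Perm.mem_support_cycleOf_iff] at hqx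
      exact hqx.1
    obtain ⟨k, hk⟩ := hsc
    rcases Int.even_or_odd k with ⟨m, hm⟩ | ⟨m, hm⟩
    · apply hq ((t ^ m) x)
      rw [key m x, ← hk, ← Equiv.Perm.mul_apply, ← zpow_add]
      congr 2
      omega
    · apply hp ((t ^ (m + 1)) x)
      rw [hpt, Equiv.Perm.mul_apply, key (m + 1) x, ← hk, ← Equiv.Perm.mul_apply,
        ← Equiv.Perm.mul_apply, mul_assoc, ← zpow_add, ← zpow_one_add]
      congr 2
      omega
  have hpmem : p ∈ Subgroup.closure ({p, q} : Set (Equiv.Perm X)) :=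
    Subgroup.subset_closure (by simp)
  have hqmem : q ∈ Subgroup.closure ({p, q} : Set (Equiv.Perm X)) :=
    Subgroup.subset_closure (by simp)
  have htmem : t ∈ Subgroup.closure ({p, q} : Set (Equiv.Perm X)) := mul_mem hpmem hqmem
  refine ⟨h1, ⟨fun c hc => mapsTo c hc, ?_, ?_⟩, part3, ?_⟩
  · -- InjOn
    intro a _ b _ hab
    have h := congrArg (fun s => q * s⁻¹ * q) hab
    simpa [hinv] using h
  · -- SurjOn
    intro c hc
    exact ⟨q * c⁻¹ * q, mapsTo c hc, hinv c⟩
  · intro c hc x hx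
    refine ⟨?_, hsupp c⟩
    rw [hsupp c]
    set S : Set X := ↑c.support ∪ ⇑q '' ↑c.support with hS
    have hcx : c = t.cycleOf x := Equiv.Perm.cycle_is_cycleOf hx hc
    have hxt : x ∈ t.support := Equiv.Perm.mem_cycleFactorsFinset_support_le hc hx
    have hmem_supp : ∀ y, y ∈ c.support ↔ t.SameCycle x y := by
      intro y
      rw [hcx, Equiv.Perm.mem_support_cycleOf_iff]
      exact and_iff_left hxt
    -- stability of S
    have htS : ∀ y ∈ S, t y ∈ S := by
      rintro y (hy | ⟨z, hz, rfl⟩)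
      · left
        simp only [Finset.mem_coe, hmem_supp] at hy ⊢
        exact Equiv.Perm.sameCycle_apply_right.mpr hy
      · right
        refine ⟨t⁻¹ z, ?_, ?_⟩
        · simp only [Finset.mem_coe, hmem_supp] at hz ⊢
          exact hz.trans ⟨-1, by simp⟩
        · have h := congrArg (fun s : Equiv.Perm X => s z) htq
          simpa using h.symm
    have hqS : ∀ y ∈ S, q y ∈ S := by
      rintro y (hy | ⟨z, hz, rfl⟩)
      · right; exact ⟨y, hy, rfl⟩
      · left; rw [hqq]; exact hz
    have hpS : ∀ y ∈ S, p y ∈ S := by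
      intro y hy
      rw [hpt, Equiv.Perm.mul_apply]
      exact htS _ (hqS _ hy)
    have hqiff : ∀ y, y ∈ S ↔ q y ∈ S := by
      intro y
      refine ⟨hqS y, fun h => ?_⟩
      have := hqS _ h
      rwa [hqq] at this
    have hpiff : ∀ y, y ∈ S ↔ p y ∈ S := by
      intro y
      refine ⟨hpS y, fun h => ?_⟩
      have := hpS _ h
      rwa [hpp] at this
    have stable : ∀ g ∈ Subgroup.closure ({p, q} : Set (Equiv.Perm X)),
        ∀ y, y ∈ S ↔ g y ∈ S := by
      intro g hg
      induction hg using Subgroup.closure_induction with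
      | mem r hr =>
        rcases hr with rfl | rfl
        · exact hpiff
        · exact hqiff
      | one => simp
      | mul a b _ _ ha hb =>
        intro y
        rw [Equiv.Perm.mul_apply]
        exact (hb y).trans (ha (b y))
      | inv a _ ha =>
        intro y
        have h := ha (a⁻¹ y)
        rw [Equiv.Perm.coe_inv, Equiv.apply_symm_apply] at h
        exact h.symm
    ext y
    constructor
    · rintro ⟨⟨g, hg⟩, rfl⟩
      have : g x ∈ S := (stable g hg x).mp (Or.inl hx)
      simpa [Equiv.Perm.smul_def] using this
    · rintro (hy | ⟨z, hz, rfl⟩)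
      · obtain ⟨k, hk⟩ := (hmem_supp y).mp hy
        exact ⟨⟨t ^ k, zpow_mem htmem k⟩, hk⟩
      · obtain ⟨k, hk⟩ := (hmem_supp z).mp hz
        refine ⟨⟨q * t ^ k, mul_mem hqmem (zpow_mem htmem k)⟩, ?_⟩
        show (q * t ^ k) x = q z
        rw [Equiv.Perm.mul_apply, hk]
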